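/- Let G be a finite tree (a connected acyclic simple graph) on a finite vertex type V with at least two vertices, and let r be any vertex. Then there exists a closed walk w in G from r to r such that every edge of G occurs exactly twice among the edges of w, and every vertex v ∈ V occurs exactly G.degree v times in the tail of the support of w (the list of vertices of w with its first entry removed). -/

import Mathlib

open SimpleGraph

private lemma euler_reach_split {V : Type*} {G : SimpleGraph V} {r u : V}
    (hru : G.Adj r u) :
    ∀ {a v : V}, G.Walk a v →
      ((G.deleteEdges {s(r, u)}).Reachable r a ∨ (G.deleteEdges {s(r, u)}).Reachable u a) →
      ((G.deleteEdges {s(r, u)}).Reachable r v ∨ (G.deleteEdges {s(r, u)}).Reachable u v) := by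
  intro a v p
  induction p with
  | nil => exact fun h => h
  | @cons a b v h q ih =>
    intro ha
    apply ih
    by_cases he : s(a, b) = s(r, u)
    · rcases Sym2.eq_iff.mp he with ⟨rfl, rfl⟩ | ⟨rfl, rfl⟩
      · exact Or.inr Reachable.rfl
      · exact Or.inl Reachable.rfl
    · have hadj : (G.deleteEdges {s(r, u)}).Adj a b := by
        rw [SimpleGraph.deleteEdges_adj]
        exact ⟨h, by simpa using he⟩
      exact ha.imp (fun h1 => h1.trans hadj.reachable) (fun h1 => h1.trans hadj.reachable)

private lemma euler_aux {V : Type*} [Fintype V] [DecidableEq V] :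
    ∀ (n : ℕ) (G : SimpleGraph V) [inst : DecidableRel G.Adj],
      G.edgeFinset.card ≤ n → G.IsAcyclic → ∀ r : V,
      ∃ w : G.Walk r r,
        (∀ x y : V, G.Adj x y → G.Reachable r x → w.edges.count s(x, y) = 2) ∧
        (∀ v : V, G.Reachable r v → w.support.tail.count v = G.degree v) := by
  intro n
  induction n with
  | zero =>
    intro G inst hcard hac r
    have hempty : G.edgeFinset = ∅ := Finset.card_eq_zero.mp (Nat.le_zero.mp hcard)
    have hbot : ∀ x y : V, ¬ G.Adj x y := by
      intro x y hxy
      have : s(x, y) ∈ G.edgeFinset := by simpa [SimpleGraph.mem_edgeFinset] using hxy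
      simp [hempty] at this
    refine ⟨Walk.nil, ?_, ?_⟩
    · intro x y hxy _; exact absurd hxy (hbot x y)
    · intro v hv
      have hvr : v = r := by
        obtain ⟨p⟩ := hv
        cases p with
        | nil => rfl
        | cons h q => exact absurd h (hbot _ _)
      subst hvr
      simp only [Walk.support_nil, List.tail_cons, List.count_nil]
      symm
      rw [← SimpleGraph.card_neighborFinset_eq_degree, Finset.card_eq_zero]
      ext b
      simp only [SimpleGraph.mem_neighborFinset, Finset.notMem_empty, iff_false]
      exact hbot v b
  | succ n ih =>
    intro G inst hcard hac r
    by_cases hex : ∃ u, G.Adj r u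
    · obtain ⟨u, hru⟩ := hex
      set D := G.deleteEdges {s(r, u)} with hD
      haveI instD : DecidableRel D.Adj := fun a b =>
        decidable_of_iff (G.Adj a b ∧ ¬ s(a, b) = s(r, u)) (by
          rw [hD, SimpleGraph.deleteEdges_adj]; simp)
      have hDle : D ≤ G := SimpleGraph.deleteEdges_le _
      have hDedge : D.edgeSet = G.edgeSet \ {s(r, u)} := by
        rw [hD]; exact SimpleGraph.edgeSet_deleteEdges _
      have hDac : D.IsAcyclic := fun v c hc => hac (c.mapLe hDle) (hc.mapLe hDle)
      have hrumem : s(r, u) ∈ G.edgeFinset := by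
        simpa [SimpleGraph.mem_edgeFinset] using hru
      have hcard' : D.edgeFinset.card ≤ n := by
        have hsub : D.edgeFinset ⊆ G.edgeFinset.erase s(r, u) := by
          intro e he
          rw [SimpleGraph.mem_edgeFinset, hDedge] at he
          rw [Finset.mem_erase, SimpleGraph.mem_edgeFinset]
          exact ⟨by simpa using he.2, he.1⟩
        have := Finset.card_le_card hsub
        rw [Finset.card_erase_of_mem hrumem] at this
        omega
      -- r and u are in different components of D
      have hnr : ¬ D.Reachable r u :=
        ((SimpleGraph.isAcyclic_iff_forall_adj_isBridge.mp hac) hru)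
      have hdisj : ∀ v : V, D.Reachable r v → D.Reachable u v → False :=
        fun v h1 h2 => hnr (h1.trans h2.symm)
      have hsplit : ∀ v : V, G.Reachable r v → D.Reachable r v ∨ D.Reachable u v := by
        intro v hv
        obtain ⟨p⟩ := hv
        exact euler_reach_split hru p (Or.inl Reachable.rfl)
      -- degree relations
      have hdegr : G.degree r = D.degree r + 1 := by
        have hnf : D.neighborFinset r = (G.neighborFinset r).erase u := by
          ext b
          rw [SimpleGraph.mem_neighborFinset, Finset.mem_erase,
            SimpleGraph.mem_neighborFinset, hD, SimpleGraph.deleteEdges_adj]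
          constructor
          · rintro ⟨h1, h2⟩
            exact ⟨fun hb => h2 (by simp [hb]), h1⟩
          · rintro ⟨h1, h2⟩
            refine ⟨h2, ?_⟩
            simp only [Set.mem_singleton_iff, Sym2.congr_right]
            exact h1
        rw [← SimpleGraph.card_neighborFinset_eq_degree,
          ← SimpleGraph.card_neighborFinset_eq_degree, hnf,
          Finset.card_erase_of_mem (by rwa [SimpleGraph.mem_neighborFinset])]
        have : 0 < (G.neighborFinset r).card :=
          Finset.card_pos.mpr ⟨u, by rwa [SimpleGraph.mem_neighborFinset]⟩
        omega
      have hdegu : G.degree u = D.degree u + 1 := by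
        have hnf : D.neighborFinset u = (G.neighborFinset u).erase r := by
          ext b
          rw [SimpleGraph.mem_neighborFinset, Finset.mem_erase,
            SimpleGraph.mem_neighborFinset, hD, SimpleGraph.deleteEdges_adj]
          constructor
          · rintro ⟨h1, h2⟩
            refine ⟨fun hb => h2 ?_, h1⟩
            subst hb
            simp [Sym2.eq_swap]
          · rintro ⟨h1, h2⟩
            refine ⟨h2, ?_⟩
            simp only [Set.mem_singleton_iff]
            intro hcon
            rw [Sym2.eq_swap (a := r)] at hcon
            exact h1 (Sym2.congr_right.mp hcon)
        rw [← SimpleGraph.card_neighborFinset_eq_degree,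
          ← SimpleGraph.card_neighborFinset_eq_degree, hnf,
          Finset.card_erase_of_mem (by rw [SimpleGraph.mem_neighborFinset]; exact hru.symm)]
        have : 0 < (G.neighborFinset u).card :=
          Finset.card_pos.mpr ⟨r, by rw [SimpleGraph.mem_neighborFinset]; exact hru.symm⟩
        omega
      have hdegv : ∀ v : V, v ≠ r → v ≠ u → G.degree v = D.degree v := by
        intro v hvr hvu
        rw [← SimpleGraph.card_neighborFinset_eq_degree,
          ← SimpleGraph.card_neighborFinset_eq_degree]
        congr 1
        ext b
        rw [SimpleGraph.mem_neighborFinset, SimpleGraph.mem_neighborFinset, hD,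
          SimpleGraph.deleteEdges_adj]
        constructor
        · intro h; exact ⟨h, by
            simp only [Set.mem_singleton_iff]
            intro hcon
            rcases Sym2.eq_iff.mp hcon with ⟨h1, _⟩ | ⟨h1, _⟩
            exacts [hvr h1, hvu h1]⟩
        · exact fun h => h.1
      obtain ⟨w1, he1, hv1⟩ := ih D hcard' hDac r
      obtain ⟨w2, he2, hv2⟩ := ih D hcard' hDac u
      have hedges1 : ∀ e ∈ w1.edges, e ∈ G.edgeSet :=
        fun e he => SimpleGraph.edgeSet_mono hDle (w1.edges_subset_edgeSet he)
      have hedges2 : ∀ e ∈ w2.edges, e ∈ G.edgeSet :=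
        fun e he => SimpleGraph.edgeSet_mono hDle (w2.edges_subset_edgeSet he)
      set w1' := w1.transfer G hedges1 with hw1'
      set w2' := w2.transfer G hedges2 with hw2'
      refine ⟨Walk.cons hru (w2'.append (Walk.cons hru.symm w1')), ?_, ?_⟩
      · -- edge counts
        intro x y hxy hrx
        rw [Walk.edges_cons, Walk.edges_append, Walk.edges_cons,
          Walk.edges_transfer, Walk.edges_transfer]
        have hnotin1 : s(r, u) ∉ w1.edges := by
          intro hmem
          have := w1.edges_subset_edgeSet hmem
          rw [hDedge] at this
          exact this.2 rfl
        have hnotin2 : s(r, u) ∉ w2.edges := by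
          intro hmem
          have := w2.edges_subset_edgeSet hmem
          rw [hDedge] at this
          exact this.2 rfl
        by_cases heq : s(x, y) = s(r, u)
        · rw [heq, Sym2.eq_swap (a := u) (b := r), List.count_cons_self, List.count_append,
            List.count_cons_self, List.count_eq_zero.mpr hnotin1,
            List.count_eq_zero.mpr hnotin2]
        · have hDadj : D.Adj x y := by
            rw [hD, SimpleGraph.deleteEdges_adj]
            exact ⟨hxy, by simpa using heq⟩
          have hne2 : s(x, y) ≠ s(u, r) := by
            rw [Sym2.eq_swap (a := u)]; exact heq
          rw [List.count_cons_of_ne (by simpa using Ne.symm heq),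
            List.count_append, List.count_cons_of_ne (by simpa using Ne.symm hne2)]
          have hmemsup : ∀ {a : V} (p : D.Walk a a), s(x, y) ∈ p.edges → D.Reachable a x :=
            fun p hp => ⟨p.takeUntil x (p.fst_mem_support_of_mem_edges hp)⟩
          rcases hsplit x hrx with hx | hx
          · have h2 : w2.edges.count s(x, y) = 0 := by
              rw [List.count_eq_zero]
              intro hmem
              exact hdisj x hx (hmemsup w2 hmem)
            rw [h2, he1 x y hDadj hx]
          · have h1 : w1.edges.count s(x, y) = 0 := by
              rw [List.count_eq_zero]
              intro hmem
              exact hdisj x (hmemsup w1 hmem) hx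
            rw [h1, he2 x y hDadj hx]
      · -- vertex counts
        intro v hv
        have htail : (Walk.cons hru (w2'.append (Walk.cons hru.symm w1'))).support.tail
            = w2.support ++ w1.support := by
          rw [Walk.support_cons, List.tail_cons, Walk.support_append, Walk.support_cons,
            List.tail_cons, Walk.support_transfer, Walk.support_transfer]
        rw [htail, List.count_append]
        have hmemsup : ∀ {a : V} (p : D.Walk a a), v ∈ p.support → D.Reachable a v :=
          fun p hp => ⟨p.takeUntil v hp⟩
        rcases hsplit v hv with hvr | hvu
        · have hc2 : w2.support.count v = 0 := by
            rw [List.count_eq_zero]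
            intro hmem
            exact hdisj v hvr (hmemsup w2 hmem)
          rw [hc2]
          rw [w1.support_eq_cons]
          by_cases hvr' : v = r
          · subst hvr'
            rw [List.count_cons_self, hv1 v hvr, hdegr]; omega
          · rw [List.count_cons_of_ne (by simpa using Ne.symm hvr'), hv1 v hvr]
            have hvu' : v ≠ u := fun h => hdisj v hvr (h ▸ Reachable.rfl)
            rw [hdegv v hvr' hvu']
            omega
        · have hc1 : w1.support.count v = 0 := by
            rw [List.count_eq_zero]
            intro hmem
            exact hdisj v (hmemsup w1 hmem) hvu
          rw [hc1]
          rw [w2.support_eq_cons]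
          by_cases hvu' : v = u
          · subst hvu'
            rw [List.count_cons_self, hv2 v hvu, hdegu]
          · rw [List.count_cons_of_ne (by simpa using Ne.symm hvu'), hv2 v hvu]
            have hvr' : v ≠ r := fun h => hdisj v (h ▸ Reachable.rfl) hvu
            rw [hdegv v hvr' hvu']
            omega
    · -- r has no neighbors
      push_neg at hex
      refine ⟨Walk.nil, ?_, ?_⟩
      · intro x y hxy hrx
        exfalso
        obtain ⟨p⟩ := hrx
        cases p with
        | nil => exact hex y hxy
        | cons h q => exact hex _ h
      · intro v hv
        have hvr : v = r := by
          obtain ⟨p⟩ := hv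
          cases p with
          | nil => rfl
          | cons h q => exact absurd h (hex _)
        subst hvr
        simp only [Walk.support_nil, List.tail_cons, List.count_nil]
        symm
        rw [← SimpleGraph.card_neighborFinset_eq_degree, Finset.card_eq_zero]
        ext b
        simp only [SimpleGraph.mem_neighborFinset, Finset.notMem_empty, iff_false]
        exact hex b

set_option maxHeartbeats 1000000 in
/-- The Euler tour of a finite tree `G` with at least two vertices traverses
every edge exactly twice and visits each vertex `v` exactly `G.degree v` times
(counted in the tail of the support of the walk). -/
theorem tree_euler_tour_degree_visits {V : Type*} [Fintype V] [DecidableEq V]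
    (G : SimpleGraph V) [DecidableRel G.Adj]
    (hT : G.IsTree) (hV : 2 ≤ Fintype.card V) (r : V) :
    ∃ w : G.Walk r r,
      (∀ e ∈ G.edgeSet, w.edges.count e = 2) ∧
      ∀ v : V, w.support.tail.count v = G.degree v := by
  obtain ⟨w, he, hv⟩ :=
    euler_aux G.edgeFinset.card G le_rfl hT.IsAcyclic r
  refine ⟨w, ?_, ?_⟩
  · intro e
    refine Sym2.ind (fun x y hee => ?_) e
    rw [SimpleGraph.mem_edgeSet] at hee
    exact he x y hee (hT.isConnected.preconnected r x)
  · intro v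
    exact hv v (hT.isConnected.preconnected r v)
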